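/- For every integer n ≥ 8, the average of the bounds satisfies u(n) + ϑ(n) > 2·S_n, where u(n) = 4^{n+1}/(3√(π n^3)), ϑ(n) = 4^{n+1}/(3(n+1)√(π n)), and S_n is the sum of the first n Catalan numbers; equivalently, μ(n) = (u(n)+ϑ(n))/2 is an upper bound for S_n for n ≥ 8. -/

import Mathlib

open Real Filter

noncomputable def C (k : ℕ) : ℝ := (Nat.choose (2 * k) k : ℝ) / ((k : ℝ) + 1)

noncomputable def S (n : ℕ) : ℝ := ∑ k ∈ Finset.Icc 1 n, C k

noncomputable def u (n : ℕ) : ℝ := 4 ^ (n + 1) / (3 * Real.sqrt (π * (n : ℝ) ^ 3))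

noncomputable def ϑ (n : ℕ) : ℝ := 4 ^ (n + 1) / (3 * ((n : ℝ) + 1) * Real.sqrt (π * n))

lemma le_of_sq {a b : ℝ} (hb : 0 ≤ b) (h : a^2 ≤ b^2) : a ≤ b := by nlinarith

noncomputable def r (n : ℕ) : ℝ := Nat.centralBinom n * Real.sqrt ((n : ℝ) + 1/4) / 4 ^ n

lemma r_mono : Monotone r := by
  apply monotone_nat_of_le_succ
  intro n
  have hrec : ((n : ℝ) + 1) * Nat.centralBinom (n + 1) = 2 * (2 * n + 1) * Nat.centralBinom n := by
    exact_mod_cast congrArg (Nat.cast (R := ℝ)) (Nat.succ_mul_centralBinom_succ n)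
  have hcb : (0:ℝ) < Nat.centralBinom n := by exact_mod_cast Nat.centralBinom_pos n
  have h4 : (0:ℝ) < 4 ^ n := by positivity
  have hs1 : Real.sqrt ((n:ℝ) + 1/4) ^ 2 = (n:ℝ) + 1/4 := Real.sq_sqrt (by positivity)
  have hs2 : Real.sqrt ((n:ℝ) + 1 + 1/4) ^ 2 = (n:ℝ) + 1 + 1/4 := Real.sq_sqrt (by positivity)
  have hs1' : 0 ≤ Real.sqrt ((n:ℝ) + 1/4) := Real.sqrt_nonneg _
  have hs2' : 0 ≤ Real.sqrt ((n:ℝ) + 1 + 1/4) := Real.sqrt_nonneg _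
  -- key: 2(n+1)·√(n+1/4) ≤ (2n+1)·√(n+5/4)
  have key : 2 * ((n:ℝ) + 1) * Real.sqrt ((n:ℝ) + 1/4) ≤ (2 * n + 1) * Real.sqrt ((n:ℝ) + 1 + 1/4) := by
    apply le_of_sq (by positivity)
    have h1 : (2 * ((n:ℝ) + 1) * Real.sqrt ((n:ℝ) + 1/4))^2 = 4 * ((n:ℝ)+1)^2 * ((n:ℝ) + 1/4) := by
      rw [mul_pow, mul_pow, hs1]; ring
    have h2 : ((2 * (n:ℝ) + 1) * Real.sqrt ((n:ℝ) + 1 + 1/4))^2 = (2*(n:ℝ)+1)^2 * ((n:ℝ) + 1 + 1/4) := by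
      rw [mul_pow, hs2]
    rw [h1, h2]; nlinarith [sq_nonneg ((n:ℝ))]
  show Nat.centralBinom n * Real.sqrt ((n : ℝ) + 1/4) / 4 ^ n ≤
    Nat.centralBinom (n+1) * Real.sqrt (((n+1 : ℕ) : ℝ) + 1/4) / 4 ^ (n+1)
  push_cast
  rw [div_le_div_iff₀ h4 (by positivity), pow_succ]
  have hfin : 4 * (((n:ℝ)+1) * (Nat.centralBinom n * Real.sqrt ((n:ℝ) + 1/4))) ≤
      (((n : ℝ) + 1) * Nat.centralBinom (n + 1)) * Real.sqrt ((n:ℝ) + 1 + 1/4) := by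
    rw [hrec]
    calc 4 * (((n:ℝ)+1) * (Nat.centralBinom n * Real.sqrt ((n:ℝ) + 1/4)))
        = (2 * Nat.centralBinom n) * (2 * ((n:ℝ) + 1) * Real.sqrt ((n:ℝ) + 1/4)) := by ring
      _ ≤ (2 * Nat.centralBinom n) * ((2 * n + 1) * Real.sqrt ((n:ℝ) + 1 + 1/4)) := by
          apply mul_le_mul_of_nonneg_left key (by positivity)
      _ = 2 * (2 * (n:ℝ) + 1) * Nat.centralBinom n * Real.sqrt ((n:ℝ) + 1 + 1/4) := by ring
  nlinarith [hfin, mul_pos hcb h4]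

lemma r_sq (n : ℕ) : r n ^ 2 = ((n:ℝ) + 1/4) / (Real.Wallis.W n * (2 * n + 1)) := by
  have hfac : ((Nat.centralBinom n : ℝ)) * n.factorial * n.factorial = (2 * n).factorial := by
    have h := Nat.choose_mul_factorial_mul_factorial (by omega : n ≤ 2 * n)
    rw [Nat.centralBinom_eq_two_mul_choose]
    have h2 : 2 * n - n = n := by omega
    rw [h2] at h
    exact_mod_cast congrArg (Nat.cast (R := ℝ)) h
  have hW : Real.Wallis.W n = 2 ^ (4 * n) * (n.factorial : ℝ) ^ 4 / ((2 * n).factorial ^ 2 * (2 * n + 1)) :=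
    Real.Wallis.W_eq_factorial_ratio n
  have hcb : (0:ℝ) < Nat.centralBinom n := by exact_mod_cast Nat.centralBinom_pos n
  have hf : (0:ℝ) < n.factorial := by exact_mod_cast n.factorial_pos
  have h2n : (0:ℝ) < (2*n).factorial := by exact_mod_cast (2*n).factorial_pos
  have hWv : Real.Wallis.W n = 16 ^ n / ((Nat.centralBinom n : ℝ)^2 * (2 * n + 1)) := by
    rw [hW, ← hfac]
    have : (2:ℝ) ^ (4 * n) = 16 ^ n := by
      rw [pow_mul]; norm_num
    rw [this]
    field_simp
  have hs : Real.sqrt ((n:ℝ) + 1/4) ^ 2 = (n:ℝ) + 1/4 := Real.sq_sqrt (by positivity)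
  have hWpos := Real.Wallis.W_pos n
  unfold r
  rw [div_pow, mul_pow, hs, hWv]
  have h16 : ((4:ℝ) ^ n) ^ 2 = 16 ^ n := by
    rw [← pow_mul, pow_mul']; norm_num
  rw [h16]
  have h16p : (0:ℝ) < 16 ^ n := by positivity
  field_simp

lemma r_nonneg (n : ℕ) : 0 ≤ r n := by
  unfold r; positivity

lemma r_tendsto : Filter.Tendsto r atTop (nhds (Real.sqrt π)⁻¹) := by
  have h2n1 : Filter.Tendsto (fun n : ℕ => 2 * (n:ℝ) + 1) atTop atTop := by
    apply Filter.tendsto_atTop_add_const_right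
    exact Filter.Tendsto.const_mul_atTop two_pos tendsto_natCast_atTop_atTop
  have hinv : Filter.Tendsto (fun n : ℕ => (2 * (n:ℝ) + 1)⁻¹) atTop (nhds 0) :=
    h2n1.inv_tendsto_atTop
  have h1 : Filter.Tendsto (fun n : ℕ => ((n:ℝ) + 1/4) / (2 * n + 1)) atTop (nhds (1/2)) := by
    have heq : (fun n : ℕ => ((n:ℝ) + 1/4) / (2 * n + 1)) =
        fun n : ℕ => 1/2 - (1/4) * (2 * (n:ℝ) + 1)⁻¹ := by
      funext n
      have : (2 * (n:ℝ) + 1) ≠ 0 := by positivity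
      field_simp
      ring
    rw [heq]
    have := (hinv.const_mul (1/4 : ℝ)).const_sub (1/2 : ℝ)
    simpa using this
  have h2 : Filter.Tendsto (fun n : ℕ => (Real.Wallis.W n)⁻¹) atTop (nhds (π/2)⁻¹) :=
    (Real.Wallis.tendsto_W_nhds_pi_div_two).inv₀ (by positivity)
  have h3 : Filter.Tendsto (fun n : ℕ => r n ^ 2) atTop (nhds (1/π)) := by
    have heq : (fun n : ℕ => r n ^ 2) =
        fun n : ℕ => ((n:ℝ) + 1/4) / (2 * n + 1) * (Real.Wallis.W n)⁻¹ := by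
      funext n
      rw [r_sq]
      have hWpos := Real.Wallis.W_pos n
      rw [div_mul_eq_div_div_swap, div_eq_mul_inv _ (Real.Wallis.W n)]
    rw [heq]
    have := h1.mul h2
    have hval : (1/2 : ℝ) * (π/2)⁻¹ = 1/π := by
      rw [div_eq_mul_inv]
      field_simp
    rwa [hval] at this
  have h4 : Filter.Tendsto (fun n : ℕ => Real.sqrt (r n ^ 2)) atTop (nhds (Real.sqrt (1/π))) :=
    (Real.continuous_sqrt.continuousAt).tendsto.comp h3
  have heq2 : (fun n : ℕ => Real.sqrt (r n ^ 2)) = r := by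
    funext n
    exact Real.sqrt_sq (r_nonneg n)
  have hval2 : Real.sqrt (1/π) = (Real.sqrt π)⁻¹ := by
    rw [one_div, Real.sqrt_inv]
  rwa [heq2, hval2] at h4

lemma cb_le (n : ℕ) : (Nat.centralBinom n : ℝ) ≤ 4 ^ n / Real.sqrt (π * ((n:ℝ) + 1/4)) := by
  have h : r n ≤ (Real.sqrt π)⁻¹ := r_mono.ge_of_tendsto r_tendsto n
  have hsp : 0 < Real.sqrt π := Real.sqrt_pos.2 Real.pi_pos
  have hsn : 0 < Real.sqrt ((n:ℝ)+1/4) := Real.sqrt_pos.2 (by positivity)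
  have h4 : (0:ℝ) < 4^n := by positivity
  rw [Real.sqrt_mul Real.pi_pos.le, le_div_iff₀ (by positivity)]
  unfold r at h
  rw [div_le_iff₀ h4] at h
  calc (Nat.centralBinom n : ℝ) * (Real.sqrt π * Real.sqrt ((n:ℝ)+1/4))
      = (Nat.centralBinom n * Real.sqrt ((n:ℝ)+1/4)) * Real.sqrt π := by ring
    _ ≤ ((Real.sqrt π)⁻¹ * 4^n) * Real.sqrt π := by
        apply mul_le_mul_of_nonneg_right h hsp.le
    _ = 4^n := by field_simp

lemma step_real (x : ℝ) (hx : 8 ≤ x) :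
    6 / ((x+2) * Real.sqrt (x + 5/4)) ≤
    4 / ((x+1) * Real.sqrt (x+1)) + 4 / ((x+2) * Real.sqrt (x+1))
      - 1 / (x * Real.sqrt x) - 1 / ((x+1) * Real.sqrt x) := by
  have hx0 : (0:ℝ) < x := by linarith
  set a := Real.sqrt x with hadef
  set b := Real.sqrt (x+1) with hbdef
  set c := Real.sqrt (x+5/4) with hcdef
  have ha2 : a^2 = x := Real.sq_sqrt hx0.le
  have hb2 : b^2 = x + 1 := Real.sq_sqrt (by linarith)
  have hc2 : c^2 = x + 5/4 := Real.sq_sqrt (by linarith)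
  have hap : 0 < a := Real.sqrt_pos.2 hx0
  have hbp : 0 < b := Real.sqrt_pos.2 (by linarith)
  have hcp : 0 < c := Real.sqrt_pos.2 (by linarith)
  have hac : a * c ≤ x + 5/8 := by
    apply le_of_sq (by linarith)
    rw [mul_pow, ha2, hc2]; nlinarith
  set A : ℝ := (2*x+1)*(x+1)*(x+2)*(x+5/4) with hA
  set B : ℝ := 4*(2*x+3)*(x+5/4)*x^2 with hB
  set Cc : ℝ := 6*x^2*(x+1)^2 with hC
  have hApos : 0 < A := by rw [hA]; positivity
  have hBpos : 0 < B := by rw [hB]; positivity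
  have hCpos : 0 < Cc := by rw [hC]; positivity
  have hpoly : A^2*x + 2*A*Cc*(x+5/8) + Cc^2*(x+5/4) ≤ B^2*(x+1) := by
    have hid : B^2*(x+1) - (A^2*x + 2*A*Cc*(x+5/8) + Cc^2*(x+5/4)) =
        12*(x-8)^8 + (1505/2)*(x-8)^7 + (162937/8)*(x-8)^6 + (4954681/16)*(x-8)^5
        + (11510917/4)*(x-8)^4 + (265612953/16)*(x-8)^3 + 57249021*(x-8)^2
        + (420198007/4)*(x-8) + 73741518 := by
      rw [hA, hB, hC]; ring
    have hs : (0:ℝ) ≤ x - 8 := by linarith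
    nlinarith [pow_nonneg hs 8, pow_nonneg hs 7, pow_nonneg hs 6, pow_nonneg hs 5,
      pow_nonneg hs 4, pow_nonneg hs 3, pow_nonneg hs 2]
  have key : A*a + Cc*c ≤ B*b := by
    apply le_of_sq (by positivity)
    have e1 : (A*a + Cc*c)^2 = A^2*x + 2*A*Cc*(a*c) + Cc^2*(x+5/4) := by
      have : (A*a + Cc*c)^2 = A^2*a^2 + 2*A*Cc*(a*c) + Cc^2*c^2 := by ring
      rw [this, ha2, hc2]
    have e2 : (B*b)^2 = B^2*(x+1) := by rw [mul_pow, hb2]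
    rw [e1, e2]
    have : 2*A*Cc*(a*c) ≤ 2*A*Cc*(x+5/8) :=
      mul_le_mul_of_nonneg_left hac (by positivity)
    linarith
  have h1b : 1/((x+1)*b) = b/((x+1)^2) := by
    rw [div_eq_div_iff (by positivity) (by positivity)]
    linear_combination (-(x+1)) * hb2
  have h2b : 1/((x+2)*b) = b/((x+2)*(x+1)) := by
    rw [div_eq_div_iff (by positivity) (by positivity)]
    linear_combination (-(x+2)) * hb2
  have h1a : 1/(x*a) = a/x^2 := by
    rw [div_eq_div_iff (by positivity) (by positivity)]
    linear_combination (-x) * ha2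
  have h2a : 1/((x+1)*a) = a/((x+1)*x) := by
    rw [div_eq_div_iff (by positivity) (by positivity)]
    linear_combination (-(x+1)) * ha2
  have h1c : 1/((x+2)*c) = c/((x+2)*(x+5/4)) := by
    rw [div_eq_div_iff (by positivity) (by positivity)]
    linear_combination (-(x+2)) * hc2
  have hrw : ∀ y z : ℝ, (6:ℝ)/(y*z) = 6 * (1/(y*z)) := by intro y z; ring
  have hrw4 : ∀ y z : ℝ, (4:ℝ)/(y*z) = 4 * (1/(y*z)) := by intro y z; ring
  rw [hrw, hrw4, hrw4, h1b, h2b, h1a, h2a, h1c]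
  rw [← sub_nonneg]
  have hid2 : 4 * (b/((x+1)^2)) + 4 * (b/((x+2)*(x+1))) - a/x^2 - a/((x+1)*x)
      - 6 * (c/((x+2)*(x+5/4))) = (B*b - A*a - Cc*c) / (x^2*(x+1)^2*(x+2)*(x+5/4)) := by
    rw [hA, hB, hC]
    field_simp
    ring
  rw [hid2]
  apply div_nonneg (by linarith) (by positivity)

lemma S8 : S 8 = 2055 := by
  rw [S, show (Finset.Icc 1 8 : Finset ℕ) = {1,2,3,4,5,6,7,8} from by decide]
  rw [show (2055:ℝ) = 1 + (2 + (5 + (14 + (42 + (132 + (429 + 1430)))))) by norm_num]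
  rw [Finset.sum_insert (by decide), Finset.sum_insert (by decide),
    Finset.sum_insert (by decide), Finset.sum_insert (by decide),
    Finset.sum_insert (by decide), Finset.sum_insert (by decide),
    Finset.sum_insert (by decide), Finset.sum_singleton]
  unfold C
  norm_num [show Nat.choose 2 1 = 2 from rfl, show Nat.choose 4 2 = 6 from rfl,
    show Nat.choose 6 3 = 20 from rfl, show Nat.choose 8 4 = 70 from rfl,
    show Nat.choose 10 5 = 252 from rfl, show Nat.choose 12 6 = 924 from rfl,
    show Nat.choose 14 7 = 3432 from rfl, show Nat.choose 16 8 = 12870 from rfl]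

lemma base8 : S 8 < (u 8 + ϑ 8) / 2 := by
  rw [S8, u, ϑ]
  have hpi := Real.pi_lt_d6
  have hpi0 := Real.pi_pos
  have h1 : Real.sqrt (π * ((8:ℕ):ℝ) ^ 3) < 40.107 := by
    rw [show (((8:ℕ):ℝ)) ^ 3 = 512 by norm_num]
    apply (Real.sqrt_lt' (by norm_num)).2
    nlinarith
  have h2 : Real.sqrt (π * ((8:ℕ):ℝ)) < 5.0133 := by
    rw [show (((8:ℕ):ℝ)) = 8 by norm_num]
    apply (Real.sqrt_lt' (by norm_num)).2
    nlinarith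
  have h1p : 0 < Real.sqrt (π * ((8:ℕ):ℝ) ^ 3) := Real.sqrt_pos.2 (by positivity)
  have h2p : 0 < Real.sqrt (π * ((8:ℕ):ℝ)) := Real.sqrt_pos.2 (by positivity)
  have hu : (262144:ℝ)/(3 * 40.107) < (4:ℝ) ^ (8 + 1) / (3 * Real.sqrt (π * ((8:ℕ):ℝ) ^ 3)) := by
    rw [show ((4:ℝ) ^ (8+1) : ℝ) = 262144 by norm_num]
    apply div_lt_div_of_pos_left (by norm_num) (by positivity) (by nlinarith)
  have hv : (262144:ℝ)/(27 * 5.0133) < (4:ℝ) ^ (8 + 1) / (3 * (((8:ℕ):ℝ) + 1) * Real.sqrt (π * ((8:ℕ):ℝ))) := by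
    rw [show ((4:ℝ) ^ (8+1) : ℝ) = 262144 by norm_num]
    apply div_lt_div_of_pos_left (by norm_num) (by positivity)
    push_cast
    nlinarith
  have : (4110:ℝ) < 262144/(3 * 40.107) + 262144/(27 * 5.0133) := by norm_num
  linarith

lemma step (n : ℕ) (hn : 8 ≤ n) : C (n+1) ≤ (u (n+1) + ϑ (n+1))/2 - (u n + ϑ n)/2 := by
  set x : ℝ := (n : ℝ) with hxdef
  have hx : (8:ℝ) ≤ x := by rw [hxdef]; exact_mod_cast hn
  have hx0 : (0:ℝ) < x := by linarith
  set a := Real.sqrt x with hadef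
  set b := Real.sqrt (x+1) with hbdef
  set c := Real.sqrt (x+5/4) with hcdef
  have ha2 : a^2 = x := Real.sq_sqrt hx0.le
  have hb2 : b^2 = x + 1 := Real.sq_sqrt (by linarith)
  have hap : 0 < a := Real.sqrt_pos.2 hx0
  have hbp : 0 < b := Real.sqrt_pos.2 (by linarith)
  have hcp : 0 < c := Real.sqrt_pos.2 (by linarith)
  have hsp : 0 < Real.sqrt π := Real.sqrt_pos.2 Real.pi_pos
  have hsu : Real.sqrt (π * x^3) = Real.sqrt π * (x * a) := by
    rw [Real.sqrt_mul Real.pi_pos.le, show x^3 = (x*a)^2 by rw [mul_pow, ha2]; ring,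
      Real.sqrt_sq (by positivity)]
  have hsu' : Real.sqrt (π * (x+1)^3) = Real.sqrt π * ((x+1) * b) := by
    rw [Real.sqrt_mul Real.pi_pos.le, show (x+1)^3 = ((x+1)*b)^2 by rw [mul_pow, hb2]; ring,
      Real.sqrt_sq (by positivity)]
  have hsv : Real.sqrt (π * x) = Real.sqrt π * a := by
    rw [Real.sqrt_mul Real.pi_pos.le]
  have hsv' : Real.sqrt (π * (x+1)) = Real.sqrt π * b := by
    rw [Real.sqrt_mul Real.pi_pos.le]
  have hsc : Real.sqrt (π * (x + 5/4)) = Real.sqrt π * c := by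
    rw [Real.sqrt_mul Real.pi_pos.le]
  set P : ℝ := (4:ℝ)^(n+1) / Real.sqrt π with hPdef
  have hPpos : 0 < P := by positivity
  -- C (n+1) ≤ P/6 * (6/((x+2)*c))
  have hC : C (n+1) ≤ P/6 * (6/((x+2)*c)) := by
    have h1 : C (n+1) = (Nat.centralBinom (n+1) : ℝ) / (x + 2) := by
      rw [C, Nat.centralBinom]
      push_cast
      rw [hxdef]
      ring
    have h2 := cb_le (n+1)
    rw [show ((n+1:ℕ):ℝ) + 1/4 = x + 5/4 by push_cast; ring, hsc] at h2
    have h3 : P/6 * (6/((x+2)*c)) = (4^(n+1) / (Real.sqrt π * c)) / (x+2) := by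
      rw [hPdef]; field_simp
    rw [h1, h3]
    exact div_le_div_of_nonneg_right h2 (by linarith)
  -- the μ difference equals P/6 * (RHS of step_real)
  have hE : (u (n+1) + ϑ (n+1))/2 - (u n + ϑ n)/2
      = P/6 * (4/((x+1)*b) + 4/((x+2)*b) - 1/(x*a) - 1/((x+1)*a)) := by
    rw [u, u, ϑ, ϑ]
    push_cast
    rw [hsu, hsu', hsv, hsv', hPdef]
    have h4 : (4:ℝ)^(n+1+1) = 4 * 4^(n+1) := by ring
    rw [h4]
    field_simp
    ring
  have hmul := mul_le_mul_of_nonneg_left (step_real x hx) (le_of_lt (by positivity : (0:ℝ) < P/6))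
  rw [hE]
  linarith [hC, hmul]

theorem stmt11 (n : ℕ) (hn : 8 ≤ n) : u n + ϑ n > 2 * S n ∧ (u n + ϑ n) / 2 > S n := by
  have main : ∀ m : ℕ, 8 ≤ m → S m < (u m + ϑ m) / 2 := by
    intro m hm
    induction m, hm using Nat.le_induction with
    | base => exact base8
    | succ k hk ih =>
      have hsum : S (k + 1) = S k + C (k + 1) := by
        rw [S, S, Finset.sum_Icc_succ_top (by omega : 1 ≤ k + 1)]
      have hstep := step k hk
      rw [hsum]
      linarith
  have h := main n hn
  constructor <;> linarith
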